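/- arXiv:1401.2415 — 4 statements merged into one kernel-verified Lean document; each statement's English description precedes it below -/
import Mathlib

section
/- The function φ(x) = tan³x / ( ln tan(x/2 + π/4) + tan x / cos x )² is strictly concave on the open interval (0, π/2). -/
open Real

lemma aux_upper_der {y : ℝ} (hy : 0 < y) :
    HasDerivAt (fun y : ℝ => (y^4 - 1)/(4*y^2) - Real.log y)
      ((y^2-1)^2/(2*y^3)) y := by
  have h1 : HasDerivAt (fun y : ℝ => (y^4 - 1)/(4*y^2))
      ((4*y^3*(4*y^2) - (y^4-1)*(4*(2*y)))/(4*y^2)^2) y := by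
    have hn : HasDerivAt (fun y : ℝ => y^4 - 1) (4*y^3) y := by
      simpa using ((hasDerivAt_pow 4 y).sub_const 1)
    have hd : HasDerivAt (fun y : ℝ => 4*y^2) (4*(2*y)) y := by
      simpa using ((hasDerivAt_pow 2 y).const_mul 4)
    exact hn.div hd (by positivity)
  have h2 := h1.fun_sub (Real.hasDerivAt_log hy.ne')
  refine h2.congr_deriv (Eq.symm ?_)
  field_simp; ring

lemma aux_lower_der {y : ℝ} (hy : 0 < y) :
    HasDerivAt (fun y : ℝ => Real.log y - (y^4 - 1)/(2*(y^4+1)))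
      ((y^4-1)^2/(y*(y^4+1)^2)) y := by
  have h1 : HasDerivAt (fun y : ℝ => (y^4 - 1)/(2*(y^4+1)))
      ((4*y^3*(2*(y^4+1)) - (y^4-1)*(2*(4*y^3)))/(2*(y^4+1))^2) y := by
    have hn : HasDerivAt (fun y : ℝ => y^4 - 1) (4*y^3) y := by
      simpa using ((hasDerivAt_pow 4 y).sub_const 1)
    have hd : HasDerivAt (fun y : ℝ => 2*(y^4+1)) (2*(4*y^3)) y := by
      simpa using (((hasDerivAt_pow 4 y).add_const 1).const_mul 2)
    exact hn.div hd (by positivity)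
  have h2 := (Real.hasDerivAt_log hy.ne').fun_sub h1
  refine h2.congr_deriv (Eq.symm ?_)
  field_simp; ring

lemma key_upper {τ : ℝ} (hτ : 1 < τ) : Real.log τ < (τ^4 - 1)/(4*τ^2) := by
  have hmono : StrictMonoOn (fun y : ℝ => (y^4 - 1)/(4*y^2) - Real.log y) (Set.Ici 1) := by
    apply strictMonoOn_of_deriv_pos (convex_Ici 1)
    · intro y hy
      exact (aux_upper_der (lt_of_lt_of_le one_pos hy)).continuousAt.continuousWithinAt
    · intro y hy
      rw [interior_Ici] at hy
      have hy1 : (1:ℝ) < y := hy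
      rw [(aux_upper_der (by linarith)).deriv]
      have : y^2 - 1 > 0 := by nlinarith
      positivity
  have := hmono (Set.self_mem_Ici) (Set.mem_Ici.mpr hτ.le) hτ
  simp only [Real.log_one] at this
  norm_num at this
  linarith

lemma key_lower {τ : ℝ} (hτ : 1 < τ) : (τ^4 - 1)/(2*(τ^4+1)) < Real.log τ := by
  have hmono : StrictMonoOn (fun y : ℝ => Real.log y - (y^4 - 1)/(2*(y^4+1))) (Set.Ici 1) := by
    apply strictMonoOn_of_deriv_pos (convex_Ici 1)
    · intro y hy
      exact (aux_lower_der (lt_of_lt_of_le one_pos hy)).continuousAt.continuousWithinAt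
    · intro y hy
      rw [interior_Ici] at hy
      have hy1 : (1:ℝ) < y := hy
      rw [(aux_lower_der (by linarith)).deriv]
      have h4 : (1:ℝ) < y^4 := by
        calc (1:ℝ) = 1^4 := by norm_num
        _ < y^4 := by gcongr
      have : y^4 - 1 > 0 := by linarith
      positivity
  have := hmono (Set.self_mem_Ici) (Set.mem_Ici.mpr hτ.le) hτ
  simp only [Real.log_one] at this
  norm_num at this
  linarith





lemma tau_facts {x : ℝ} (hx : x ∈ Set.Ioo 0 (π/2)) :
    1 < tan (x/2 + π/4) ∧
    tan x / cos x = (tan (x/2 + π/4)^4 - 1)/(4*tan (x/2 + π/4)^2) ∧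
    (2:ℝ)/cos x^2 - 1 = (tan (x/2 + π/4)^4 + 1)/(2*tan (x/2 + π/4)^2) := by
  obtain ⟨hx0, hx2⟩ := hx
  have hpi := pi_pos
  obtain ⟨a, ha_def⟩ : ∃ a : ℝ, a = x/2 + π/4 := ⟨_, rfl⟩
  rw [← ha_def]
  have ha1 : π/4 < a := by rw [ha_def]; linarith
  have ha2 : a < π/2 := by rw [ha_def]; linarith
  have hca : 0 < cos a := cos_pos_of_mem_Ioo ⟨by linarith, ha2⟩
  have ha0 : 0 < a := lt_trans (by positivity) ha1
  have hsa : 0 < sin a := sin_pos_of_pos_of_lt_pi ha0 (by linarith)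
  have hτ : 1 < tan a := by
    have := Real.tan_lt_tan_of_nonneg_of_lt_pi_div_two (le_of_lt (by positivity : (0:ℝ) < π/4)) ha2 ha1
    rwa [Real.tan_pi_div_four] at this
  have h2a : x + π/2 = 2*a := by rw [ha_def]; ring
  have hcx : cos x = 2 * sin a * cos a := by
    rw [← Real.sin_add_pi_div_two, h2a, Real.sin_two_mul]
  have hsx : sin x = sin a^2 - cos a^2 := by
    have h := Real.cos_add_pi_div_two x
    have h2 : cos (x + π/2) = cos (2*a) := by rw [h2a]
    rw [h] at h2
    rw [Real.cos_two_mul] at h2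
    have hpyth := Real.sin_sq_add_cos_sq a
    nlinarith [h2]
  have hta : tan a = sin a / cos a := Real.tan_eq_sin_div_cos a
  have hc : 0 < cos x := cos_pos_of_mem_Ioo ⟨by linarith, hx2⟩
  have htx : tan x = sin x / cos x := Real.tan_eq_sin_div_cos x
  have hpyth : sin a^2 + cos a^2 = 1 := Real.sin_sq_add_cos_sq a
  refine ⟨hτ, ?_, ?_⟩
  · rw [htx, hsx, hcx, hta]
    field_simp
    linear_combination (-4*sin a^2 + 4*cos a^2) * hpyth
  · rw [hcx, hta]
    field_simp
    linear_combination (-(sin a^2 + cos a^2 + 1)) * hpyth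

lemma fact_upper {x : ℝ} (hx : x ∈ Set.Ioo 0 (π/2)) :
    Real.log (tan (x/2 + π/4)) < tan x / cos x := by
  obtain ⟨hτ, hid1, _⟩ := tau_facts hx
  rw [hid1]
  exact key_upper hτ

lemma fact_lower {x : ℝ} (hx : x ∈ Set.Ioo 0 (π/2)) :
    tan x / cos x < ((2:ℝ)/cos x^2 - 1) * Real.log (tan (x/2 + π/4)) := by
  obtain ⟨hτ, hid1, hid2⟩ := tau_facts hx
  obtain ⟨τ, hτdef⟩ : ∃ τ : ℝ, τ = tan (x/2 + π/4) := ⟨_, rfl⟩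
  rw [hid1, hid2, ← hτdef]
  rw [← hτdef] at hτ
  have h1 := key_lower hτ
  have hτ0 : (0:ℝ) < τ := by linarith
  have h2 : (0:ℝ) < (τ^4 + 1)/(2*τ^2) := by positivity
  calc (τ^4 - 1)/(4*τ^2)
      = (τ^4 + 1)/(2*τ^2) * ((τ^4 - 1)/(2*(τ^4+1))) := by
        rw [div_mul_div_comm]
        rw [div_eq_div_iff (by positivity) (by positivity)]
        ring
    _ < (τ^4 + 1)/(2*τ^2) * Real.log τ := (mul_lt_mul_iff_right₀ h2).mpr h1

lemma log_pos_fact {x : ℝ} (hx : x ∈ Set.Ioo 0 (π/2)) :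
    0 < Real.log (tan (x/2 + π/4)) := by
  obtain ⟨hτ, _, _⟩ := tau_facts hx
  exact Real.log_pos hτ


noncomputable def Df : ℝ → ℝ := fun x => Real.log (tan (x/2 + π/4)) + tan x / cos x

lemma hasDeriv_L {x : ℝ} (hx : x ∈ Set.Ioo 0 (π/2)) :
    HasDerivAt (fun y : ℝ => Real.log (tan (y/2 + π/4))) (1/cos x) x := by
  obtain ⟨hx0, hx2⟩ := hx
  have hpi := pi_pos
  have ha1 : π/4 < x/2 + π/4 := by linarith
  have ha2 : x/2 + π/4 < π/2 := by linarith
  have hca : 0 < cos (x/2 + π/4) := cos_pos_of_mem_Ioo ⟨by linarith, ha2⟩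
  have hsa : 0 < sin (x/2 + π/4) :=
    sin_pos_of_pos_of_lt_pi (by linarith) (by linarith)
  have hta : 0 < tan (x/2 + π/4) := by
    rw [Real.tan_eq_sin_div_cos]; positivity
  have h1 : HasDerivAt (fun y : ℝ => y/2 + π/4) (1/2) x := by
    simpa using ((hasDerivAt_id x).div_const 2).add_const (π/4)
  have h2 : HasDerivAt tan (1 / cos (x/2 + π/4) ^ 2) (x/2 + π/4) :=
    Real.hasDerivAt_tan hca.ne'
  have h3 := h2.comp x h1
  have h4 := h3.log hta.ne'
  refine h4.congr_deriv (Eq.symm ?_)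
  simp only [Function.comp]
  have hcx : cos x = 2 * sin (x/2 + π/4) * cos (x/2 + π/4) := by
    rw [← Real.sin_add_pi_div_two]
    have : x + π/2 = 2*(x/2 + π/4) := by ring
    rw [this, Real.sin_two_mul]
  rw [hcx, Real.tan_eq_sin_div_cos]
  obtain ⟨p, hp⟩ : ∃ p : ℝ, p = cos (x/2 + π/4) := ⟨_, rfl⟩
  obtain ⟨q, hq⟩ : ∃ q : ℝ, q = sin (x/2 + π/4) := ⟨_, rfl⟩
  rw [← hp, ← hq]
  have hp0 : p ≠ 0 := by rw [hp]; exact hca.ne'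
  have hq0 : q ≠ 0 := by rw [hq]; exact hsa.ne'
  field_simp

lemma hasDeriv_D {x : ℝ} (hx : x ∈ Set.Ioo 0 (π/2)) :
    HasDerivAt Df (2 / cos x ^ 3) x := by
  have hc : 0 < cos x := cos_pos_of_mem_Ioo ⟨by linarith [hx.1, pi_pos], hx.2⟩
  have htan : HasDerivAt tan (1 / cos x ^ 2) x := Real.hasDerivAt_tan hc.ne'
  have hq : HasDerivAt (fun y : ℝ => tan y / cos y)
      ((1/cos x^2 * cos x - tan x * (-sin x)) / cos x ^ 2) x :=
    htan.div (Real.hasDerivAt_cos x) hc.ne'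
  have h := (hasDeriv_L hx).fun_add hq
  refine h.congr_deriv (Eq.symm ?_)
  have hs : sin x = tan x * cos x := by
    rw [Real.tan_eq_sin_div_cos]; field_simp
  have hrel : tan x ^ 2 * cos x ^ 2 = 1 - cos x ^ 2 := by
    have h1 : tan x ^ 2 * cos x ^ 2 = sin x ^ 2 := by rw [hs]; ring
    have h2 := Real.sin_sq_add_cos_sq x
    linarith
  rw [hs]
  field_simp
  linear_combination (-1) * hrel


lemma Df_pos {x : ℝ} (hx : x ∈ Set.Ioo 0 (π/2)) : 0 < Df x := by
  have hc : 0 < cos x := cos_pos_of_mem_Ioo ⟨by linarith [hx.1, pi_pos], hx.2⟩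
  have ht : 0 < tan x := Real.tan_pos_of_pos_of_lt_pi_div_two hx.1 hx.2
  have hL := log_pos_fact hx
  have : 0 < tan x / cos x := by positivity
  unfold Df; linarith

noncomputable def phi1 : ℝ → ℝ :=
  fun x => (3*(tan x^2/cos x^2)*Df x - 4*(tan x^3/cos x^3))/Df x^3

lemma hasDeriv_phi {x : ℝ} (hx : x ∈ Set.Ioo 0 (π/2)) :
    HasDerivAt (fun y : ℝ => tan y ^ 3 / (Real.log (tan (y/2 + π/4)) + tan y / cos y) ^ 2)
      (phi1 x) x := by
  have hc : 0 < cos x := cos_pos_of_mem_Ioo ⟨by linarith [hx.1, pi_pos], hx.2⟩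
  have hD0 : Df x ≠ 0 := (Df_pos hx).ne'
  have htan : HasDerivAt tan (1 / cos x ^ 2) x := Real.hasDerivAt_tan hc.ne'
  have hN : HasDerivAt (fun y : ℝ => tan y ^ 3) ((3:ℕ) * tan x ^ 2 * (1/cos x^2)) x := by
    simpa using htan.fun_pow 3
  have hD2 : HasDerivAt (fun y : ℝ => Df y ^ 2) ((2:ℕ) * Df x ^ 1 * (2/cos x^3)) x := by
    simpa using (hasDeriv_D hx).fun_pow 2
  have h := hN.fun_div hD2 (by positivity)
  have heq : (fun y : ℝ => tan y ^ 3 / Df y ^ 2)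
      = (fun y : ℝ => tan y ^ 3 / (Real.log (tan (y/2 + π/4)) + tan y / cos y) ^ 2) := rfl
  rw [heq] at h
  refine h.congr_deriv (Eq.symm ?_)
  unfold phi1
  push_cast
  field_simp
  ring

lemma hasDeriv_t2c2 {x : ℝ} (hx : x ∈ Set.Ioo 0 (π/2)) :
    HasDerivAt (fun y : ℝ => tan y^2/cos y^2) (2*tan x*(2-cos x^2)/cos x^4) x := by
  have hc : 0 < cos x := cos_pos_of_mem_Ioo ⟨by linarith [hx.1, pi_pos], hx.2⟩
  have htan : HasDerivAt tan (1 / cos x ^ 2) x := Real.hasDerivAt_tan hc.ne'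
  have hn : HasDerivAt (fun y : ℝ => tan y ^ 2) ((2:ℕ) * tan x ^ 1 * (1/cos x^2)) x := by
    simpa using htan.fun_pow 2
  have hd : HasDerivAt (fun y : ℝ => cos y ^ 2) ((2:ℕ) * cos x ^ 1 * (-sin x)) x := by
    simpa using (Real.hasDerivAt_cos x).fun_pow 2
  have h := hn.fun_div hd (by positivity)
  refine h.congr_deriv (Eq.symm ?_)
  have hs : sin x = tan x * cos x := by
    rw [Real.tan_eq_sin_div_cos]; field_simp
  have hrel : tan x ^ 2 * cos x ^ 2 = 1 - cos x ^ 2 := by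
    have h1 : tan x ^ 2 * cos x ^ 2 = sin x ^ 2 := by rw [hs]; ring
    have h2 := Real.sin_sq_add_cos_sq x
    linarith
  rw [hs]
  push_cast
  field_simp
  linear_combination (-(tan x)) * hrel

lemma hasDeriv_t3c3 {x : ℝ} (hx : x ∈ Set.Ioo 0 (π/2)) :
    HasDerivAt (fun y : ℝ => tan y^3/cos y^3) (3*tan x^2*(2-cos x^2)/cos x^5) x := by
  have hc : 0 < cos x := cos_pos_of_mem_Ioo ⟨by linarith [hx.1, pi_pos], hx.2⟩
  have htan : HasDerivAt tan (1 / cos x ^ 2) x := Real.hasDerivAt_tan hc.ne'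
  have hn : HasDerivAt (fun y : ℝ => tan y ^ 3) ((3:ℕ) * tan x ^ 2 * (1/cos x^2)) x := by
    simpa using htan.fun_pow 3
  have hd : HasDerivAt (fun y : ℝ => cos y ^ 3) ((3:ℕ) * cos x ^ 2 * (-sin x)) x := by
    simpa using (Real.hasDerivAt_cos x).fun_pow 3
  have h := hn.fun_div hd (by positivity)
  refine h.congr_deriv (Eq.symm ?_)
  have hs : sin x = tan x * cos x := by
    rw [Real.tan_eq_sin_div_cos]; field_simp
  have hrel : tan x ^ 2 * cos x ^ 2 = 1 - cos x ^ 2 := by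
    have h1 : tan x ^ 2 * cos x ^ 2 = sin x ^ 2 := by rw [hs]; ring
    have h2 := Real.sin_sq_add_cos_sq x
    linarith
  rw [hs]
  push_cast
  field_simp
  linear_combination (-(tan x^2)) * hrel

lemma hasDeriv_phi1 {x : ℝ} (hx : x ∈ Set.Ioo 0 (π/2)) :
    HasDerivAt phi1
      (6*tan x*(1/cos x^2) *
        ((Df x - 2*(tan x/cos x)) * ((2/cos x^2 - 1)*Df x - 2*(tan x/cos x^3))) / Df x^4) x := by
  have hc : 0 < cos x := cos_pos_of_mem_Ioo ⟨by linarith [hx.1, pi_pos], hx.2⟩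
  have hD0 : Df x ≠ 0 := (Df_pos hx).ne'
  have hA : HasDerivAt (fun y : ℝ => 3*(tan y^2/cos y^2)*Df y - 4*(tan y^3/cos y^3))
      ((3*(2*tan x*(2-cos x^2)/cos x^4))*Df x + (3*(tan x^2/cos x^2))*(2/cos x^3)
        - 4*(3*tan x^2*(2-cos x^2)/cos x^5)) x :=
    (((hasDeriv_t2c2 hx).const_mul 3).fun_mul (hasDeriv_D hx)).fun_sub ((hasDeriv_t3c3 hx).const_mul 4)
  have hD3 : HasDerivAt (fun y : ℝ => Df y ^ 3) ((3:ℕ) * Df x ^ 2 * (2/cos x^3)) x := by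
    simpa using (hasDeriv_D hx).fun_pow 3
  have h := hA.fun_div hD3 (by positivity)
  have heq : (fun y : ℝ => (3*(tan y^2/cos y^2)*Df y - 4*(tan y^3/cos y^3)) / Df y ^ 3) = phi1 := rfl
  rw [heq] at h
  refine h.congr_deriv (Eq.symm ?_)
  push_cast
  field_simp
  ring

theorem stmt_2 :
    StrictConcaveOn ℝ (Set.Ioo 0 (π/2))
      (fun x => tan x ^ 3 / (log (tan (x/2 + π/4)) + tan x / cos x) ^ 2) := by
  apply strictConcaveOn_of_deriv2_neg (convex_Ioo 0 (π/2))
  · intro x hx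
    exact (hasDeriv_phi hx).continuousAt.continuousWithinAt
  · intro x hx
    rw [interior_Ioo] at hx
    have hmem : Set.Ioo 0 (π/2) ∈ nhds x := Ioo_mem_nhds hx.1 hx.2
    have hev : (deriv (fun x => tan x ^ 3 / (log (tan (x/2 + π/4)) + tan x / cos x) ^ 2))
        =ᶠ[nhds x] phi1 := by
      filter_upwards [hmem] with y hy
      exact (hasDeriv_phi hy).deriv
    have h2 : deriv^[2] (fun x => tan x ^ 3 / (log (tan (x/2 + π/4)) + tan x / cos x) ^ 2) x
        = deriv phi1 x := by
      simp only [Function.iterate_succ, Function.iterate_zero, Function.comp_apply, id_eq]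
      exact hev.deriv_eq
    rw [h2, (hasDeriv_phi1 hx).deriv]
    -- sign analysis
    have hc : 0 < cos x := cos_pos_of_mem_Ioo ⟨by linarith [hx.1, pi_pos], hx.2⟩
    have ht : 0 < tan x := Real.tan_pos_of_pos_of_lt_pi_div_two hx.1 hx.2
    have hDpos : 0 < Df x := Df_pos hx
    have hF1 : Df x - 2*(tan x/cos x) < 0 := by
      have := fact_upper hx
      unfold Df; linarith
    have hF2 : 0 < (2/cos x^2 - 1)*Df x - 2*(tan x/cos x^3) := by
      have hlow := fact_lower hx
      have hexp : (2/cos x^2 - 1)*Df x - 2*(tan x/cos x^3)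
          = (2/cos x^2 - 1) * Real.log (tan (x/2 + π/4)) - tan x / cos x := by
        unfold Df
        field_simp
        ring
      rw [hexp]
      linarith
    have hmul : (Df x - 2*(tan x/cos x)) * ((2/cos x^2 - 1)*Df x - 2*(tan x/cos x^3)) < 0 :=
      mul_neg_of_neg_of_pos hF1 hF2
    have hpos : 0 < 6*tan x*(1/cos x^2) := by positivity
    have hnum : 6*tan x*(1/cos x^2) *
        ((Df x - 2*(tan x/cos x)) * ((2/cos x^2 - 1)*Df x - 2*(tan x/cos x^3))) < 0 :=
      mul_neg_of_pos_of_neg hpos hmul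
    exact div_neg_of_neg_of_pos hnum (by positivity)
end

section
/- Let n ≥ 1 be an integer, θ ∈ (0, π], and A > 0. For all α_1, …, α_n ∈ (0, π/2) with Σ_{j=1}^n α_j = θ and all R_1, …, R_n > 0 with Σ_{j=1}^n R_j² sin α_j cos α_j = A, one has Σ_{j=1}^n (R_j³ cos³α_j / 3) ∫_{−α_j}^{α_j} dt/cos³t ≥ (A^{3/2}/3) ( ln tan(θ/(2n) + π/4) + tan(θ/n)/cos(θ/n) ) (n tan³(θ/n))^{−1/2}, with equality if and only if α_j = θ/n and R_j = (2A/(n sin(2θ/n)))^{1/2} for all j. -/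
open Real

noncomputable def Ji (x : ℝ) : ℝ := sin x / cos x ^ 2 + Real.log ((1 + sin x) / cos x)

lemma one_add_sin_pos {x : ℝ} (hc : 0 < cos x) : 0 < 1 + sin x := by
  rcases lt_or_eq_of_le (neg_one_le_sin x) with h | h
  · linarith
  · nlinarith [sin_sq_add_cos_sq x]

lemma hasDerivAt_sincos {x : ℝ} (hc : 0 < cos x) :
    HasDerivAt (fun y => sin y / cos y ^ 2) ((1 + sin x ^ 2) / cos x ^ 3) x := by
  have hc' : cos x ≠ 0 := hc.ne'
  have h1 : HasDerivAt (fun y => sin y / cos y ^ 2)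
      ((cos x * cos x ^ 2 - sin x * (2 * cos x ^ 1 * (-sin x))) / (cos x ^ 2) ^ 2) x :=
    (hasDerivAt_sin x).div ((hasDerivAt_cos x).pow 2) (pow_ne_zero _ hc')
  convert h1 using 1
  have hpy := sin_sq_add_cos_sq x
  field_simp
  ring_nf
  linear_combination (-1) * hpy

lemma hasDerivAt_logterm {x : ℝ} (hc : 0 < cos x) :
    HasDerivAt (fun y => Real.log ((1 + sin y) / cos y)) (1 / cos x) x := by
  have hc' : cos x ≠ 0 := hc.ne'
  have h1s : 0 < 1 + sin x := one_add_sin_pos hc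
  have h2 : HasDerivAt (fun y => (1 + sin y) / cos y)
      (((0 + cos x) * cos x - (1 + sin x) * (-sin x)) / cos x ^ 2) x :=
    ((hasDerivAt_const x 1).add (hasDerivAt_sin x)).div (hasDerivAt_cos x) hc'
  have h3 := h2.log (by positivity : (1 + sin x) / cos x ≠ 0)
  convert h3 using 1
  have hpy := sin_sq_add_cos_sq x
  field_simp
  ring_nf
  linear_combination (-1) * hpy

lemma hasDerivAt_Ji {x : ℝ} (hc : 0 < cos x) : HasDerivAt Ji (2 / cos x ^ 3) x := by
  have := (hasDerivAt_sincos hc).add (hasDerivAt_logterm hc)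
  refine this.congr_deriv (Eq.symm ?_)
  have hpy := sin_sq_add_cos_sq x
  field_simp
  linear_combination (-1) * hpy

lemma Ji_neg {a : ℝ} (hc : 0 < cos a) : Ji (-a) = - Ji a := by
  have hc' : cos a ≠ 0 := hc.ne'
  have h1s : 0 < 1 + sin a := one_add_sin_pos hc
  have h : (1 - sin a) / cos a = ((1 + sin a) / cos a)⁻¹ := by
    rw [inv_div, div_eq_div_iff hc' h1s.ne']
    nlinarith [sin_sq_add_cos_sq a]
  unfold Ji
  rw [sin_neg, cos_neg, neg_div, show (1 + -sin a) = 1 - sin a by ring, h, log_inv]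
  ring

lemma integral_sec3 {a : ℝ} (ha : a ∈ Set.Ioo 0 (π/2)) :
    (∫ t in (-a)..a, 1 / cos t ^ 3) = Ji a := by
  have hsub : ∀ t ∈ Set.uIcc (-a) a, 0 < cos t := by
    intro t ht
    rw [Set.uIcc_of_le (by linarith [ha.1] : -a ≤ a)] at ht
    apply cos_pos_of_mem_Ioo
    constructor <;> [linarith [ht.1, ha.2]; linarith [ht.2, ha.2]]
  have hderiv : ∀ t ∈ Set.uIcc (-a) a, HasDerivAt (fun y => Ji y / 2) (1 / cos t ^ 3) t := by
    intro t ht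
    have := (hasDerivAt_Ji (hsub t ht)).div_const 2
    refine this.congr_deriv (Eq.symm ?_)
    ring
  have hint : IntervalIntegrable (fun t => 1 / cos t ^ 3) MeasureTheory.volume (-a) a := by
    apply ContinuousOn.intervalIntegrable
    exact continuousOn_const.div (continuousOn_cos.pow 3)
      (fun t ht => pow_ne_zero _ (hsub t ht).ne')
  rw [intervalIntegral.integral_eq_sub_of_hasDerivAt hderiv hint,
    Ji_neg (by simpa using (hsub a (Set.right_mem_uIcc)))]
  ring

lemma tan_half_eq {c : ℝ} (hc : c ∈ Set.Ioo 0 (π/2)) :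
    tan (c/2 + π/4) = (1 + sin c) / cos c := by
  have hcosc : 0 < cos c := cos_pos_of_mem_Ioo ⟨by linarith [hc.1, pi_pos], hc.2⟩
  have hu : 0 < cos (c/2 + π/4) := by
    apply cos_pos_of_mem_Ioo
    constructor <;> [nlinarith [hc.1, pi_pos]; nlinarith [hc.2, pi_pos]]
  have hs : cos (c/2 + π/4) = (cos (c/2) - sin (c/2)) * (Real.sqrt 2 / 2) := by
    rw [cos_add, cos_pi_div_four, sin_pi_div_four]; ring
  have hs2 : sin (c/2 + π/4) = (cos (c/2) + sin (c/2)) * (Real.sqrt 2 / 2) := by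
    rw [sin_add, cos_pi_div_four, sin_pi_div_four]; ring
  have hdiff : 0 < cos (c/2) - sin (c/2) := by
    by_contra h
    push_neg at h
    have h2 : 0 < Real.sqrt 2 / 2 := by positivity
    nlinarith [hu, hs]
  have hsinc : sin c = 2 * sin (c/2) * cos (c/2) := by
    have := sin_two_mul (c/2); rwa [show 2*(c/2) = c by ring] at this
  have hcosc2 : cos c = cos (c/2) ^ 2 - sin (c/2) ^ 2 := by
    have := cos_two_mul (c/2)
    rw [show 2*(c/2) = c by ring] at this
    nlinarith [sin_sq_add_cos_sq (c/2)]
  have hpy := sin_sq_add_cos_sq (c/2)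
  rw [tan_eq_sin_div_cos, hs, hs2, hsinc, hcosc2]
  rw [div_eq_div_iff (by positivity) (by rw [← hcosc2]; exact hcosc.ne')]
  linear_combination (Real.sqrt 2 / 2) * (cos (c/2) - sin (c/2)) * hpy

-- bound proofs; (Ji defined in p1, here restated locally for testing)
lemma cos_lt_one' {x : ℝ} (hx : 0 < x) (hx2 : x < π/2) : cos x < 1 := by
  nlinarith [sin_sq_add_cos_sq x, sin_pos_of_pos_of_lt_pi hx (by linarith [pi_pos]),
    cos_le_one x, sin_le_one x,
    cos_lt_cos_of_nonneg_of_le_pi (le_refl 0) (by linarith [pi_pos]) hx]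

lemma logterm_lt {x : ℝ} (hx : x ∈ Set.Ioo 0 (π/2)) :
    Real.log ((1 + sin x)/cos x) < sin x / cos x ^ 2 := by
  set f : ℝ → ℝ := fun y => sin y / cos y ^ 2 - Real.log ((1 + sin y)/cos y) with hf
  have key : ∀ y ∈ Set.Icc (0:ℝ) x, 0 < cos y := by
    intro y hy
    exact cos_pos_of_mem_Ioo ⟨by linarith [hy.1, pi_pos], lt_of_le_of_lt hy.2 hx.2⟩
  have hder : ∀ y ∈ Set.Icc (0:ℝ) x, HasDerivAt f ((1 + sin y ^ 2)/cos y ^ 3 - 1/cos y) y := by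
    intro y hy
    exact (hasDerivAt_sincos (key y hy)).sub (hasDerivAt_logterm (key y hy))
  have hmono : StrictMonoOn f (Set.Icc 0 x) := by
    apply strictMonoOn_of_deriv_pos (convex_Icc 0 x)
    · exact fun y hy => (hder y hy).continuousAt.continuousWithinAt
    · intro y hy
      rw [interior_Icc] at hy
      have hy' : y ∈ Set.Icc (0:ℝ) x := ⟨hy.1.le, hy.2.le⟩
      rw [(hder y hy').deriv]
      have hc := key y hy'
      have hs : 0 < sin y := sin_pos_of_pos_of_lt_pi hy.1 (by nlinarith [hy.2, hx.2, pi_pos])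
      have hpy := sin_sq_add_cos_sq y
      rw [sub_pos, div_lt_div_iff₀ hc (by positivity)]
      nlinarith [pow_pos hc 2, pow_pos hs 2]
  have h0 : f 0 < f x := hmono (Set.left_mem_Icc.2 hx.1.le) (Set.right_mem_Icc.2 hx.1.le) hx.1
  simp only [hf, sin_zero, cos_zero, one_pow, zero_div, add_zero, div_one, log_one] at h0
  linarith

lemma lt_logterm {x : ℝ} (hx : x ∈ Set.Ioo 0 (π/2)) :
    sin x / (1 + sin x ^ 2) < Real.log ((1 + sin x)/cos x) := by
  set f : ℝ → ℝ := fun y => Real.log ((1 + sin y)/cos y) - sin y / (1 + sin y ^ 2) with hf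
  have key : ∀ y ∈ Set.Icc (0:ℝ) x, 0 < cos y := by
    intro y hy
    exact cos_pos_of_mem_Ioo ⟨by linarith [hy.1, pi_pos], lt_of_le_of_lt hy.2 hx.2⟩
  have hder : ∀ y ∈ Set.Icc (0:ℝ) x, HasDerivAt f
      (1/cos y - (cos y * (1 + sin y ^ 2)
        - sin y * (0 + 2 * sin y ^ 1 * cos y)) / (1 + sin y ^ 2) ^ 2) y := by
    intro y hy
    refine (hasDerivAt_logterm (key y hy)).sub ?_
    exact HasDerivAt.div (hasDerivAt_sin y)
      ((hasDerivAt_const y 1).add ((hasDerivAt_sin y).pow 2)) (by positivity)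
  have hmono : StrictMonoOn f (Set.Icc 0 x) := by
    apply strictMonoOn_of_deriv_pos (convex_Icc 0 x)
    · exact fun y hy => (hder y hy).continuousAt.continuousWithinAt
    · intro y hy
      rw [interior_Icc] at hy
      have hy' : y ∈ Set.Icc (0:ℝ) x := ⟨hy.1.le, hy.2.le⟩
      rw [(hder y hy').deriv]
      have hc := key y hy'
      have hc1 : cos y < 1 := cos_lt_one' hy.1 (lt_trans hy.2 hx.2)
      have hpy := sin_sq_add_cos_sq y
      have h1 : (cos y * (1 + sin y ^ 2)
          - sin y * (0 + 2 * sin y ^ 1 * cos y)) / (1 + sin y ^ 2) ^ 2 ≤ 1 := by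
        rw [div_le_one (by positivity)]
        nlinarith [sq_nonneg (sin y), sq_nonneg (sin y ^ 2), cos_le_one y, hc]
      have h2 : 1 < 1/cos y := by
        rw [lt_div_iff₀ hc]; linarith
      linarith
  have h0 : f 0 < f x := hmono (Set.left_mem_Icc.2 hx.1.le) (Set.right_mem_Icc.2 hx.1.le) hx.1
  norm_num [hf] at h0
  linarith

noncomputable def Ps (x : ℝ) : ℝ := tan x ^ 3 / Ji x ^ 2
noncomputable def Ps1 (x : ℝ) : ℝ :=
  (3 * tan x ^ 2 * Ji x - 4 * tan x ^ 3 / cos x) / (cos x ^ 2 * Ji x ^ 3)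

lemma Ji_pos {x : ℝ} (hx : x ∈ Set.Ioo 0 (π/2)) : 0 < Ji x := by
  have hc : 0 < cos x := cos_pos_of_mem_Ioo ⟨by linarith [hx.1, pi_pos], hx.2⟩
  have hs : 0 < sin x := sin_pos_of_pos_of_lt_pi hx.1 (by linarith [hx.2, pi_pos])
  have h1 : 0 < sin x / (1 + sin x ^ 2) := by positivity
  have h2 := lt_logterm hx
  have : 0 < sin x / cos x ^ 2 := by positivity
  unfold Ji; linarith

lemma hasDerivAt_Ps {x : ℝ} (hx : x ∈ Set.Ioo 0 (π/2)) : HasDerivAt Ps (Ps1 x) x := by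
  have hc : 0 < cos x := cos_pos_of_mem_Ioo ⟨by linarith [hx.1, pi_pos], hx.2⟩
  have hJ : 0 < Ji x := Ji_pos hx
  have htan := Real.hasDerivAt_tan hc.ne'
  have h1 : HasDerivAt (fun y => tan y ^ 3) (3 * tan x ^ 2 * (1 / cos x ^ 2)) x := by
    have := htan.pow 3; norm_num at this ⊢; exact this
    try ring
  have h2 : HasDerivAt (fun y => Ji y ^ 2) (2 * Ji x * (2 / cos x ^ 3)) x := by
    have := (hasDerivAt_Ji hc).pow 2; norm_num at this ⊢; exact this
    try ring
  have h := h1.div h2 (by positivity)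
  refine h.congr_deriv (Eq.symm ?_)
  unfold Ps1
  field_simp
  ring

lemma hasDerivAt_Ps1 {x : ℝ} (hx : x ∈ Set.Ioo 0 (π/2)) :
    HasDerivAt Ps1 (6 * tan x / (cos x ^ 2 * Ji x ^ 4) * (Ji x - 2 * sin x / cos x ^ 2) *
      ((1 + 2 * tan x ^ 2) * Ji x - 2 * sin x / cos x ^ 4)) x := by
  have hc : 0 < cos x := cos_pos_of_mem_Ioo ⟨by linarith [hx.1, pi_pos], hx.2⟩
  have hJ : 0 < Ji x := Ji_pos hx
  have htan := Real.hasDerivAt_tan hc.ne'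
  have hN : HasDerivAt (fun y => 3 * tan y ^ 2 * Ji y - 4 * tan y ^ 3 / cos y)
      ((3 * (2 * tan x ^ 1 * (1 / cos x ^ 2))) * Ji x + 3 * tan x ^ 2 * (2 / cos x ^ 3)
        - (4 * (3 * tan x ^ 2 * (1 / cos x ^ 2)) * cos x - 4 * tan x ^ 3 * (-sin x)) / cos x ^ 2)
      x := by
    have ha := ((htan.pow 2).const_mul 3).mul (hasDerivAt_Ji hc)
    have hb := ((htan.pow 3).const_mul 4).div (hasDerivAt_cos x) hc.ne'
    have := ha.sub hb
    refine this.congr_deriv (Eq.symm ?_)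
    simp only [Pi.pow_apply]; ring
  have hD : HasDerivAt (fun y => cos y ^ 2 * Ji y ^ 3)
      ((2 * cos x ^ 1 * (-sin x)) * Ji x ^ 3 + cos x ^ 2 * (3 * Ji x ^ 2 * (2 / cos x ^ 3))) x :=
    (((hasDerivAt_cos x).pow 2)).mul ((hasDerivAt_Ji hc).pow 3)
  have h := hN.div hD (by positivity)
  refine h.congr_deriv (Eq.symm ?_)
  have hpy := sin_sq_add_cos_sq x
  rw [Real.tan_eq_sin_div_cos]
  field_simp
  ring_nf
  linear_combination (6*sin x*cos x^4*Ji x^2 - 12*sin x^2*cos x^2*Ji x) * hpy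

lemma Ps_deriv2_neg {x : ℝ} (hx : x ∈ Set.Ioo 0 (π/2)) : deriv^[2] Ps x < 0 := by
  have hc : 0 < cos x := cos_pos_of_mem_Ioo ⟨by linarith [hx.1, pi_pos], hx.2⟩
  have hs : 0 < sin x := sin_pos_of_pos_of_lt_pi hx.1 (by linarith [hx.2, pi_pos])
  have ht : 0 < tan x := by rw [Real.tan_eq_sin_div_cos]; positivity
  have hJ : 0 < Ji x := Ji_pos hx
  have heq : deriv Ps =ᶠ[nhds x] Ps1 := by
    filter_upwards [isOpen_Ioo.mem_nhds hx] with y hy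
    exact (hasDerivAt_Ps hy).deriv
  have h2 : deriv^[2] Ps x = deriv Ps1 x := by
    simp only [Function.iterate_succ, Function.iterate_zero, Function.comp_apply, id_eq]
    exact heq.deriv_eq
  rw [h2, (hasDerivAt_Ps1 hx).deriv]
  have f1 : Ji x - 2 * sin x / cos x ^ 2 < 0 := by
    have := logterm_lt hx
    unfold Ji
    have : Real.log ((1 + sin x)/cos x) < sin x / cos x ^ 2 := this
    have he : sin x / cos x ^ 2 + Real.log ((1 + sin x) / cos x) - 2 * sin x / cos x ^ 2
        = Real.log ((1 + sin x) / cos x) - sin x / cos x ^ 2 := by ring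
    rw [he]; linarith
  have f2 : 0 < (1 + 2 * tan x ^ 2) * Ji x - 2 * sin x / cos x ^ 4 := by
    have hB := lt_logterm hx
    have hpy := sin_sq_add_cos_sq x
    have key : (1 + 2 * tan x ^ 2) * Ji x - 2 * sin x / cos x ^ 4
        = (1 + 2 * tan x ^ 2) * (Real.log ((1 + sin x)/cos x) - sin x / (1 + sin x ^ 2)) := by
      unfold Ji
      rw [Real.tan_eq_sin_div_cos]
      have h1s : (0:ℝ) < 1 + sin x ^ 2 := by positivity
      field_simp
      linear_combination (2*sin x^3 + sin x*cos x^2 + 2*sin x) * hpy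
    rw [key]
    have hpos : (0:ℝ) < 1 + 2 * tan x ^ 2 := by positivity
    exact mul_pos hpos (by linarith)
  have hK : 0 < 6 * tan x / (cos x ^ 2 * Ji x ^ 4) := by positivity
  exact mul_neg_of_neg_of_pos (mul_neg_of_pos_of_neg hK f1) f2

lemma Ps_strictConcave : StrictConcaveOn ℝ (Set.Ioo 0 (π/2)) Ps := by
  apply strictConcaveOn_of_deriv2_neg (convex_Ioo _ _)
  · exact fun y hy => (hasDerivAt_Ps hy).continuousAt.continuousWithinAt
  · intro y hy
    rw [interior_Ioo] at hy
    exact Ps_deriv2_neg hy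

lemma tangent_lt {f : ℝ → ℝ} {S : Set ℝ} (hf : StrictConcaveOn ℝ S f) {c m y : ℝ}
    (hc : c ∈ S) (hm : HasDerivAt f m c) (hy : y ∈ S) (hne : y ≠ c) :
    f y < f c + m * (y - c) := by
  rcases lt_trichotomy y c with h | h | h
  · have hlt := hf.lt_slope_of_hasDerivAt hy hc h hm
    rw [slope_def_field] at hlt
    rw [lt_div_iff₀ (by linarith : 0 < c - y)] at hlt
    nlinarith
  · exact absurd h hne
  · have hlt := hf.slope_lt_of_hasDerivAt hc hy h hm
    rw [slope_def_field] at hlt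
    rw [div_lt_iff₀ (by linarith : 0 < y - c)] at hlt
    nlinarith

lemma lemA {a q G : ℝ} (ha : 0 < a) (hq : 0 < q) (hG : 0 < G) :
    q * a - (4/3) * q^3 / G^2 ≤ a * Real.sqrt a * G / 3 ∧
    (a * Real.sqrt a * G / 3 = q * a - (4/3) * q^3 / G^2 ↔ Real.sqrt a * G = 2*q) := by
  have hsa : 0 < Real.sqrt a := Real.sqrt_pos.2 ha
  have hsq : Real.sqrt a ^ 2 = a := Real.sq_sqrt ha.le
  have key : a * Real.sqrt a * G / 3 - (q * a - (4/3) * q^3 / G^2)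
      = (Real.sqrt a * G + q) * (Real.sqrt a * G - 2*q)^2 / (3 * G^2) := by
    field_simp
    linear_combination (3*q*G^2 - Real.sqrt a*G^3) * hsq
  have hnum : 0 ≤ (Real.sqrt a * G + q) * (Real.sqrt a * G - 2*q)^2 / (3 * G^2) := by positivity
  refine ⟨by linarith, ?_, ?_⟩
  · intro h
    rw [h, sub_self] at key
    have h2 : (Real.sqrt a * G - 2*q)^2 = 0 := by
      have hpos : 0 < Real.sqrt a * G + q := by positivity
      by_contra hne
      have : 0 < (Real.sqrt a * G - 2*q)^2 := lt_of_le_of_ne (sq_nonneg _) (Ne.symm hne)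
      have : 0 < (Real.sqrt a * G + q) * (Real.sqrt a * G - 2*q)^2 / (3 * G^2) := by positivity
      linarith
    have := pow_eq_zero_iff (n := 2) (by norm_num) |>.1 h2
    linarith
  · intro h
    have : (Real.sqrt a * G - 2*q)^2 = 0 := by rw [h]; ring
    rw [this] at key
    simp at key
    linarith

noncomputable def Gf (y : ℝ) : ℝ := Ji y / (tan y * Real.sqrt (tan y))

lemma tan_pos' {y : ℝ} (hy : y ∈ Set.Ioo 0 (π/2)) : 0 < tan y := by
  have hc : 0 < cos y := cos_pos_of_mem_Ioo ⟨by linarith [hy.1, pi_pos], hy.2⟩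
  have hs : 0 < sin y := sin_pos_of_pos_of_lt_pi hy.1 (by linarith [hy.2, pi_pos])
  rw [Real.tan_eq_sin_div_cos]; positivity

lemma Gf_pos {y : ℝ} (hy : y ∈ Set.Ioo 0 (π/2)) : 0 < Gf y := by
  have ht := tan_pos' hy
  have hJ := Ji_pos hy
  have := Real.sqrt_pos.2 ht
  unfold Gf; positivity

lemma Ps_eq_inv_G_sq {y : ℝ} (hy : y ∈ Set.Ioo 0 (π/2)) : Ps y = 1 / Gf y ^ 2 := by
  have ht := tan_pos' hy
  have hJ := Ji_pos hy
  have hst : 0 < Real.sqrt (tan y) := Real.sqrt_pos.2 ht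
  unfold Ps Gf
  rw [div_pow, mul_pow, Real.sq_sqrt ht.le, one_div, inv_div]
  rw [show tan y ^ 2 * tan y = tan y ^ 3 by ring]

lemma C1 {y R : ℝ} (hy : y ∈ Set.Ioo 0 (π/2)) (hR : 0 < R) :
    (R^2 * sin y * cos y) * Real.sqrt (R^2 * sin y * cos y) * Gf y = R^3 * cos y^3 * Ji y := by
  have hc : 0 < cos y := cos_pos_of_mem_Ioo ⟨by linarith [hy.1, pi_pos], hy.2⟩
  have hs : 0 < sin y := sin_pos_of_pos_of_lt_pi hy.1 (by linarith [hy.2, pi_pos])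
  have ht := tan_pos' hy
  have hst : 0 < Real.sqrt (tan y) := Real.sqrt_pos.2 ht
  have e2 : Real.sqrt (R^2 * sin y * cos y) = R * Real.sqrt (sin y * cos y) := by
    rw [mul_assoc, Real.sqrt_mul (by positivity), Real.sqrt_sq hR.le]
  have e3 : Real.sqrt (sin y * cos y) = Real.sqrt (tan y) * cos y := by
    rw [show sin y * cos y = tan y * cos y ^ 2 by
        rw [Real.tan_eq_sin_div_cos]; field_simp,
      Real.sqrt_mul ht.le, Real.sqrt_sq hc.le]
  rw [e2, e3]
  unfold Gf
  have e4 : R ^ 2 * sin y * cos y * (R * (Real.sqrt (tan y) * cos y)) *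
      (Ji y / (tan y * Real.sqrt (tan y)))
      = R^3 * cos y^2 * (sin y / tan y) * Ji y := by
    field_simp
  rw [e4, show sin y / tan y = cos y by rw [Real.tan_eq_sin_div_cos]; field_simp]
  ring

set_option maxHeartbeats 1000000 in
theorem stmt_3 (n : ℕ) (hn : 1 ≤ n) (θ A : ℝ) (hθ : θ ∈ Set.Ioc 0 π) (hA : 0 < A)
    (α R : Fin n → ℝ) (hα : ∀ j, α j ∈ Set.Ioo 0 (π/2)) (hαsum : ∑ j, α j = θ)
    (hR : ∀ j, 0 < R j) (hRsum : ∑ j, R j ^ 2 * sin (α j) * cos (α j) = A) :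
    (A ^ ((3:ℝ)/2) / 3) * (log (tan (θ/(2*n) + π/4)) + tan (θ/n) / cos (θ/n)) *
        ((n : ℝ) * tan (θ/n) ^ 3) ^ (-(1:ℝ)/2)
      ≤ (∑ j, (R j ^ 3 * cos (α j) ^ 3 / 3) * ∫ t in (-(α j))..(α j), 1 / cos t ^ 3) ∧
    ((∑ j, (R j ^ 3 * cos (α j) ^ 3 / 3) * ∫ t in (-(α j))..(α j), 1 / cos t ^ 3)
        = (A ^ ((3:ℝ)/2) / 3) * (log (tan (θ/(2*n) + π/4)) + tan (θ/n) / cos (θ/n)) *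
          ((n : ℝ) * tan (θ/n) ^ 3) ^ (-(1:ℝ)/2)
      ↔ ∀ j, α j = θ/n ∧ R j = (2*A/(n * sin (2*θ/n))) ^ ((1:ℝ)/2)) := by
  haveI : Nonempty (Fin n) := ⟨⟨0, hn⟩⟩
  have hn' : (0:ℝ) < n := by exact_mod_cast hn
  obtain ⟨hθ0, hθπ⟩ := hθ
  set c := θ / (n:ℝ) with hc_def
  have hnc : (n:ℝ) * c = θ := by rw [hc_def]; field_simp
  have hcm : c ∈ Set.Ioo 0 (π/2) := by
    constructor
    · exact div_pos hθ0 hn'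
    · have hlt : θ < (n:ℝ) * (π/2) := by
        calc θ = ∑ j, α j := hαsum.symm
        _ < ∑ _j : Fin n, (π/2) :=
          Finset.sum_lt_sum_of_nonempty Finset.univ_nonempty (fun j _ => (hα j).2)
        _ = (n:ℝ) * (π/2) := by
          rw [Finset.sum_const, Finset.card_univ, Fintype.card_fin, nsmul_eq_mul]
      rw [hc_def, div_lt_iff₀ hn']
      linarith
  have hcc : 0 < cos c := cos_pos_of_mem_Ioo ⟨by linarith [hcm.1, pi_pos], hcm.2⟩
  have hsc : 0 < sin c := sin_pos_of_pos_of_lt_pi hcm.1 (by linarith [hcm.2, pi_pos])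
  have htc := tan_pos' hcm
  have hJc := Ji_pos hcm
  have hGc := Gf_pos hcm
  have hstc : 0 < Real.sqrt (tan c) := Real.sqrt_pos.2 htc
  have hsAn : 0 < Real.sqrt (A / n) := Real.sqrt_pos.2 (by positivity)
  have hsqAn : Real.sqrt (A / n) ^ 2 = A / n := Real.sq_sqrt (by positivity)
  -- abbreviations
  set a : Fin n → ℝ := fun j => R j ^ 2 * sin (α j) * cos (α j) with ha_def
  have hapos : ∀ j, 0 < a j := by
    intro j
    have hcj : 0 < cos (α j) := cos_pos_of_mem_Ioo ⟨by linarith [(hα j).1, pi_pos], (hα j).2⟩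
    have hsj : 0 < sin (α j) := sin_pos_of_pos_of_lt_pi (hα j).1 (by linarith [(hα j).2, pi_pos])
    have := hR j
    positivity
  have hAsum : ∑ j, a j = A := hRsum
  -- rewrite the sum
  have hsum_eq : (∑ j, (R j ^ 3 * cos (α j) ^ 3 / 3) * ∫ t in (-(α j))..(α j), 1 / cos t ^ 3)
      = ∑ j, a j * Real.sqrt (a j) * Gf (α j) / 3 := by
    refine Finset.sum_congr rfl fun j _ => ?_
    rw [integral_sec3 (hα j)]
    simp only [ha_def]
    have := C1 (hα j) (hR j)
    linarith
  -- rewrite the RHS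
  have hRHSeq : (A ^ ((3:ℝ)/2) / 3) * (log (tan (θ/(2*(n:ℝ)) + π/4)) + tan c / cos c) *
      ((n : ℝ) * tan c ^ 3) ^ (-(1:ℝ)/2) = A * Real.sqrt (A / n) * Gf c / 3 := by
    have e1 : θ/(2*(n:ℝ)) + π/4 = c/2 + π/4 := by rw [hc_def]; ring
    have e2 : log (tan (c/2 + π/4)) + tan c / cos c = Ji c := by
      rw [tan_half_eq hcm]
      unfold Ji
      rw [Real.tan_eq_sin_div_cos, div_div]
      rw [show cos c * cos c = cos c ^ 2 by ring]
      ring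
    have e3 : A ^ ((3:ℝ)/2) = A * Real.sqrt A := by
      rw [show ((3:ℝ)/2) = (1:ℝ) + 1/2 by norm_num, Real.rpow_add hA, Real.rpow_one,
        ← Real.sqrt_eq_rpow]
    have e4 : ((n : ℝ) * tan c ^ 3) ^ (-(1:ℝ)/2)
        = 1 / (Real.sqrt n * (tan c * Real.sqrt (tan c))) := by
      rw [show (-(1:ℝ)/2) = -(1/2 : ℝ) by norm_num,
        Real.rpow_neg (by positivity), ← Real.sqrt_eq_rpow,
        Real.sqrt_mul (by positivity : (0:ℝ) ≤ (n:ℝ)),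
        show tan c ^ 3 = tan c ^ 2 * tan c by ring,
        Real.sqrt_mul (sq_nonneg _), Real.sqrt_sq htc.le]
      rw [one_div]
    have e5 : Real.sqrt (A / n) = Real.sqrt A / Real.sqrt n := Real.sqrt_div hA.le n
    have hsn : 0 < Real.sqrt (n:ℝ) := Real.sqrt_pos.2 hn'
    rw [e1, e2, e3, e4, e5]
    unfold Gf
    field_simp
  set q := Real.sqrt (A / n) * Gf c / 2 with hq_def
  have hq : 0 < q := by positivity
  set m := Ps1 c with hm_def
  have hm : HasDerivAt Ps m c := hasDerivAt_Ps hcm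
  have hq3 : 0 < (4/3) * q^3 := by positivity
  -- tangent facts
  have htangle : ∀ j, Ps (α j) ≤ Ps c + m * (α j - c) := by
    intro j
    by_cases hje : α j = c
    · rw [hje, sub_self, mul_zero, add_zero]
    · exact (tangent_lt Ps_strictConcave hcm hm (hα j) hje).le
  have htang_strict : ∀ j, α j ≠ c → Ps (α j) < Ps c + m * (α j - c) :=
    fun j hje => tangent_lt Ps_strictConcave hcm hm (hα j) hje
  -- lemA facts
  have hPs_j : ∀ j, (4/3) * q^3 * Ps (α j) = (4/3) * q^3 / (Gf (α j))^2 := by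
    intro j; rw [Ps_eq_inv_G_sq (hα j)]; ring
  have hlemA : ∀ j, q * a j - (4/3) * q^3 * Ps (α j) ≤ a j * Real.sqrt (a j) * Gf (α j) / 3 := by
    intro j
    rw [hPs_j j]
    exact (lemA (hapos j) hq (Gf_pos (hα j))).1
  have hlemAeq : ∀ j, (a j * Real.sqrt (a j) * Gf (α j) / 3 = q * a j - (4/3) * q^3 * Ps (α j))
      ↔ Real.sqrt (a j) * Gf (α j) = 2 * q := by
    intro j
    rw [hPs_j j]
    exact (lemA (hapos j) hq (Gf_pos (hα j))).2
  -- per j bound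
  set B : Fin n → ℝ := fun j => q * a j - (4/3) * q^3 * (Ps c + m * (α j - c)) with hB_def
  set T : Fin n → ℝ := fun j => a j * Real.sqrt (a j) * Gf (α j) / 3 with hT_def
  have hBT : ∀ j, B j ≤ T j := by
    intro j
    have h1 : B j ≤ q * a j - (4/3) * q^3 * Ps (α j) := by
      have := htangle j
      have h2 := mul_le_mul_of_nonneg_left this hq3.le
      simp only [hB_def]
      nlinarith [h2]
    exact h1.trans (hlemA j)
  -- sum of B
  have hKsum : ∑ j, B j = q * A - (4/3) * q^3 * ((n:ℝ) * Ps c) := by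
    have hs1 : ∑ j, (q * a j) = q * A := by rw [← Finset.mul_sum, hAsum]
    have hs2 : ∑ j, (((4:ℝ)/3*q^3*m) * α j) = ((4:ℝ)/3*q^3*m) * θ := by
      rw [← Finset.mul_sum, hαsum]
    have hs3 : ∑ _j : Fin n, ((4:ℝ)/3*q^3*Ps c) = (n:ℝ) * ((4:ℝ)/3*q^3*Ps c) := by
      rw [Finset.sum_const, Finset.card_univ, Fintype.card_fin, nsmul_eq_mul]
    have hs4 : ∑ _j : Fin n, (((4:ℝ)/3*q^3*m) * c) = (n:ℝ) * (((4:ℝ)/3*q^3*m) * c) := by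
      rw [Finset.sum_const, Finset.card_univ, Fintype.card_fin, nsmul_eq_mul]
    have h2 : ∑ j, B j = ∑ j, ((q * a j - (4:ℝ)/3*q^3*Ps c - ((4:ℝ)/3*q^3*m) * α j)
        + ((4:ℝ)/3*q^3*m) * c) := Finset.sum_congr rfl fun j _ => by simp only [hB_def]; ring
    rw [h2, Finset.sum_add_distrib, Finset.sum_sub_distrib, Finset.sum_sub_distrib,
      hs1, hs2, hs3, hs4]
    linear_combination ((4/3) * q^3 * m) * hnc
  -- value of K
  have hKval : q * A - (4/3) * q^3 * ((n:ℝ) * Ps c) = A * Real.sqrt (A / n) * Gf c / 3 := by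
    have hsqA : Real.sqrt A ^ 2 = A := Real.sq_sqrt hA.le
    have hsqn : Real.sqrt (n:ℝ) ^ 2 = (n:ℝ) := Real.sq_sqrt hn'.le
    rw [Ps_eq_inv_G_sq hcm, hq_def]
    field_simp
    have hnA : (n:ℝ) * Real.sqrt (A / n) ^ 2 = A := by rw [hsqAn]; field_simp
    linear_combination (-4) * hnA
  rw [hsum_eq, hRHSeq]
  have hmain : A * Real.sqrt (A / n) * Gf c / 3 ≤ ∑ j, T j := by
    rw [← hKval, ← hKsum]
    exact Finset.sum_le_sum fun j _ => hBT j
  constructor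
  · exact hmain
  constructor
  · -- equality → conditions
    intro h
    have hz : ∑ j, (T j - B j) = 0 := by
      rw [Finset.sum_sub_distrib, h, hKsum, hKval, sub_self]
    have heach : ∀ j ∈ Finset.univ, T j - B j = 0 :=
      (Finset.sum_eq_zero_iff_of_nonneg fun j _ => sub_nonneg.2 (hBT j)).1 hz
    intro j
    have hj0 : T j - B j = 0 := heach j (Finset.mem_univ j)
    have hM1 : B j ≤ q * a j - (4/3) * q^3 * Ps (α j) := by
      have h2 := mul_le_mul_of_nonneg_left (htangle j) hq3.le
      simp only [hB_def]
      nlinarith [h2]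
    have hM2 := hlemA j
    have hαj : α j = c := by
      by_contra hne
      have hst := htang_strict j hne
      have h2 := mul_lt_mul_of_pos_left hst hq3
      have : B j < q * a j - (4/3) * q^3 * Ps (α j) := by
        simp only [hB_def]; nlinarith [h2]
      simp only [hT_def] at hj0 hM2
      linarith
    have heqT : T j = q * a j - (4/3) * q^3 * Ps (α j) := by
      have hBj : B j = q * a j - (4/3) * q^3 * Ps (α j) := by
        simp only [hB_def, hαj]; ring_nf
      rw [sub_eq_zero] at hj0
      rw [hj0, hBj]
    have hGeq : Real.sqrt (a j) * Gf (α j) = 2 * q := (hlemAeq j).1 heqT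
    rw [hαj] at hGeq
    have haj : a j = A / n := by
      have h2 : Real.sqrt (a j) = Real.sqrt (A / n) := by
        have : Real.sqrt (A / n) * Gf c = 2 * q := by rw [hq_def]; ring
        have h3 := hGeq.trans this.symm
        exact mul_right_cancel₀ hGc.ne' h3
      calc a j = Real.sqrt (a j) ^ 2 := (Real.sq_sqrt (hapos j).le).symm
      _ = Real.sqrt (A / n) ^ 2 := by rw [h2]
      _ = A / n := hsqAn
    refine ⟨hαj, ?_⟩
    have h2c : (2 * θ / (n:ℝ)) = 2 * c := by rw [hc_def]; try ring
    have hsin2c : sin (2 * c) = 2 * sin c * cos c := by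
      rw [sin_two_mul]
    have hX : (2 * A / ((n:ℝ) * sin (2 * θ / n))) = A / ((n:ℝ) * sin c * cos c) := by
      rw [h2c, hsin2c]
      field_simp
    have hRj2 : R j ^ 2 = A / ((n:ℝ) * sin c * cos c) := by
      have : R j ^ 2 * sin c * cos c = A / n := by
        have := haj
        simp only [ha_def, hαj] at this
        exact this
      field_simp at this ⊢
      linarith [this]
    rw [hX, ← hRj2, ← Real.sqrt_eq_rpow, Real.sqrt_sq (hR j).le]
  · -- conditions → equality
    intro h
    have haj : ∀ j, a j = A / n := by
      intro j
      obtain ⟨h1, h2⟩ := h j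
      have h2c : (2 * θ / (n:ℝ)) = 2 * c := by rw [hc_def]; try ring
      have hsin2c : sin (2 * c) = 2 * sin c * cos c := by rw [sin_two_mul]
      have hX : (2 * A / ((n:ℝ) * sin (2 * θ / n))) = A / ((n:ℝ) * sin c * cos c) := by
        rw [h2c, hsin2c]; field_simp
      have hXpos : 0 < A / ((n:ℝ) * sin c * cos c) := by positivity
      have hRj2 : R j ^ 2 = A / ((n:ℝ) * sin c * cos c) := by
        rw [h2, hX, ← Real.sqrt_eq_rpow, Real.sq_sqrt hXpos.le]
      simp only [ha_def, h1, hRj2]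
      field_simp
    have hTj : ∀ j, T j = A / n * Real.sqrt (A / n) * Gf c / 3 := by
      intro j
      simp only [hT_def, haj j, (h j).1]
    rw [Finset.sum_congr rfl fun j _ => hTj j, Finset.sum_const, Finset.card_univ,
      Fintype.card_fin, nsmul_eq_mul]
    field_simp
end

section
/- The function p(x) = (cos²x / sin x) · ln tan(π/4 + x/2) is strictly monotonically decreasing on the open interval (0, π/2). -/
open Real

/-- Auxiliary: `2s < log(1+s) - log(1-s)` for `0 < s < 1`. -/
lemma aux_artanh_gt (s : ℝ) (hs0 : 0 < s) (hs1 : s < 1) :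
    2 * s < Real.log (1 + s) - Real.log (1 - s) := by
  have key : StrictMonoOn (fun t : ℝ => Real.log (1 + t) - Real.log (1 - t) - 2 * t)
      (Set.Ico 0 1) := by
    apply strictMonoOn_of_deriv_pos (convex_Ico 0 1)
    · apply ContinuousOn.sub
      · apply ContinuousOn.sub
        · apply ContinuousOn.log (by fun_prop)
          intro t ht
          simp only [Set.mem_Ico] at ht
          intro h
          try simp only [id_eq] at h
          nlinarith [ht.1]
        · apply ContinuousOn.log (by fun_prop)
          intro t ht
          simp only [Set.mem_Ico] at ht
          intro h
          try simp only [id_eq] at h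
          nlinarith [ht.2]
      · fun_prop
    · intro t ht
      rw [interior_Ico] at ht
      obtain ⟨ht0, ht1⟩ := ht
      have hp1 : (0 : ℝ) < 1 + t := by linarith
      have hp2 : (0 : ℝ) < 1 - t := by linarith
      have h1 : HasDerivAt (fun t : ℝ => Real.log (1 + t)) (1 / (1 + t)) t := by
        have := ((hasDerivAt_id t).const_add (1 : ℝ)).log (by
          intro h; try simp only [id_eq] at h
          linarith)
        simpa using this
      have h2 : HasDerivAt (fun t : ℝ => Real.log (1 - t)) (-1 / (1 - t)) t := by
        have := ((hasDerivAt_id t).neg.const_add (1 : ℝ)).log (by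
          intro h; try simp only [Pi.neg_apply, id_eq] at h
          linarith)
        simpa [sub_eq_add_neg] using this
      have h3 : HasDerivAt (fun t : ℝ => Real.log (1 + t) - Real.log (1 - t) - 2 * t)
          (1 / (1 + t) - (-1 / (1 - t)) - 2) t := by
        exact ((h1.sub h2).sub (by simpa using (hasDerivAt_id t).const_mul (2 : ℝ)))
      rw [h3.deriv]
      have hsum : 1 / (1 + t) + 1 / (1 - t) = 2 / ((1 + t) * (1 - t)) := by
        rw [div_add_div _ _ hp1.ne' hp2.ne']
        congr 1
        ring
      have hlt : 2 < 2 / ((1 + t) * (1 - t)) := by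
        rw [lt_div_iff₀ (by positivity)]
        nlinarith
      have : -1 / (1 - t) = -(1 / (1 - t)) := by ring
      rw [this]
      linarith [hsum, hlt]
  have h0 : (0 : ℝ) ∈ Set.Ico (0 : ℝ) 1 := by constructor <;> norm_num
  have hs : s ∈ Set.Ico (0 : ℝ) 1 := ⟨hs0.le, hs1⟩
  have := key h0 hs hs0
  simp only [add_zero, sub_zero, Real.log_one, mul_zero] at this
  linarith

lemma aux_Lderiv (su cu c : ℝ) (hsu : su ≠ 0) (hcu : cu ≠ 0) (hc : c ≠ 0)
    (h : su * cu = c / 2) :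
    1 / cu ^ 2 * (1 / 2) / (su / cu) = 1 / c := by
  have hc' : c = 2 * (su * cu) := by linarith
  subst hc'
  field_simp

lemma aux_ident (s c L : ℝ) (hs : s ≠ 0) (hc : c ≠ 0) :
    (2 * c * -s * s - c ^ 2 * c) / s ^ 2 * L + c ^ 2 / s * (1 / c)
      = c * ((-(2 * s ^ 2) - c ^ 2) * L + s) / s ^ 2 := by
  field_simp

theorem stmt_10 :
    StrictAntiOn (fun x => (cos x ^ 2 / sin x) * log (tan (π/4 + x/2)))
      (Set.Ioo 0 (π/2)) := by
  have hpi : (0 : ℝ) < π := Real.pi_pos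
  -- key facts at each point
  have main : ∀ x ∈ Set.Ioo (0 : ℝ) (π/2),
      HasDerivAt (fun x => (cos x ^ 2 / sin x) * log (tan (π/4 + x/2)))
        ((2 * cos x * -sin x * sin x - cos x ^ 2 * cos x) / sin x ^ 2
            * log (tan (π/4 + x/2)) + cos x ^ 2 / sin x * (1 / cos x)) x ∧
      ((2 * cos x * -sin x * sin x - cos x ^ 2 * cos x) / sin x ^ 2
            * log (tan (π/4 + x/2)) + cos x ^ 2 / sin x * (1 / cos x)) < 0 := by
    intro x hx
    obtain ⟨hx0, hx2⟩ := hx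
    have hs : 0 < sin x := Real.sin_pos_of_pos_of_lt_pi hx0 (by linarith)
    have hc : 0 < cos x := Real.cos_pos_of_mem_Ioo ⟨by linarith, hx2⟩
    have hpyth : sin x ^ 2 + cos x ^ 2 = 1 := Real.sin_sq_add_cos_sq x
    have hs1 : sin x < 1 := by nlinarith
    have hcu : 0 < cos (π/4 + x/2) :=
      Real.cos_pos_of_mem_Ioo ⟨by linarith, by linarith⟩
    have hsu : 0 < sin (π/4 + x/2) :=
      Real.sin_pos_of_pos_of_lt_pi (by linarith) (by linarith)
    -- product-to-x identities
    have hcos_shift : cos (π/2 + x) = -sin x := by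
      rw [Real.cos_add]; simp
    have hsin_shift : sin (π/2 + x) = cos x := by
      rw [Real.sin_add]; simp
    have hsc : sin (π/4 + x/2) * cos (π/4 + x/2) = cos x / 2 := by
      have h := Real.sin_two_mul (π/4 + x/2)
      have h2 : 2 * (π/4 + x/2) = π/2 + x := by ring
      rw [h2, hsin_shift] at h
      linarith
    have hcsq : cos (π/4 + x/2) ^ 2 = (1 - sin x) / 2 := by
      have h := Real.cos_sq (π/4 + x/2)
      have h2 : 2 * (π/4 + x/2) = π/2 + x := by ring
      rw [h2, hcos_shift] at h
      linarith
    have htanu : tan (π/4 + x/2) = cos x / (1 - sin x) := by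
      rw [Real.tan_eq_sin_div_cos]
      rw [div_eq_div_iff hcu.ne' (by linarith)]
      nlinarith [hsc, hcsq]
    have htanu_pos : 0 < tan (π/4 + x/2) := by
      rw [htanu]
      exact div_pos hc (by linarith)
    -- the log value
    have hlogval : log (tan (π/4 + x/2))
        = (Real.log (1 + sin x) - Real.log (1 - sin x)) / 2 := by
      rw [htanu, Real.log_div hc.ne' (by linarith)]
      have hsq : Real.log (cos x ^ 2) = 2 * Real.log (cos x) := by
        rw [Real.log_pow]; norm_num
      have hfac : Real.log (cos x ^ 2) = Real.log (1 + sin x) + Real.log (1 - sin x) := by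
        rw [← Real.log_mul (by linarith) (by linarith)]
        congr 1
        nlinarith
      linarith [hsq, hfac]
    have hL : sin x < log (tan (π/4 + x/2)) := by
      rw [hlogval]
      have := aux_artanh_gt (sin x) hs hs1
      linarith
    -- derivative of inner affine map
    have hinner : HasDerivAt (fun y : ℝ => π/4 + y/2) (1/2) x := by
      simpa using ((hasDerivAt_id x).div_const 2).const_add (π/4)
    have htand : HasDerivAt (fun y : ℝ => tan (π/4 + y/2))
        (1 / cos (π/4 + x/2) ^ 2 * (1/2)) x :=
      by have := (Real.hasDerivAt_tan hcu.ne').comp x hinner; exact this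
    have hlogd : HasDerivAt (fun y : ℝ => log (tan (π/4 + y/2)))
        ((1 / cos (π/4 + x/2) ^ 2 * (1/2)) / tan (π/4 + x/2)) x := htand.log htanu_pos.ne'
    have hL' : (1 / cos (π/4 + x/2) ^ 2 * (1/2)) / tan (π/4 + x/2) = 1 / cos x := by
      rw [Real.tan_eq_sin_div_cos]
      exact aux_Lderiv _ _ _ hsu.ne' hcu.ne' hc.ne' hsc
    rw [hL'] at hlogd
    have hfd : HasDerivAt (fun y : ℝ => cos y ^ 2 / sin y)
        ((2 * cos x * -sin x * sin x - cos x ^ 2 * cos x) / sin x ^ 2) x := by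
      have h1 : HasDerivAt (fun y : ℝ => cos y ^ 2) (2 * cos x ^ 1 * -sin x) x :=
        (Real.hasDerivAt_cos x).pow 2
      have := h1.div (Real.hasDerivAt_sin x) hs.ne'
      simp only [pow_one] at this; exact this
    refine ⟨hfd.mul hlogd, ?_⟩
    -- negativity
    have hid : (2 * cos x * -sin x * sin x - cos x ^ 2 * cos x) / sin x ^ 2
            * log (tan (π/4 + x/2)) + cos x ^ 2 / sin x * (1 / cos x)
        = cos x * ((-(2 * sin x ^ 2) - cos x ^ 2) * log (tan (π/4 + x/2)) + sin x)
            / sin x ^ 2 :=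
      aux_ident _ _ _ hs.ne' hc.ne'
    rw [hid]
    apply div_neg_of_neg_of_pos _ (by positivity)
    have hneg : (-(2 * sin x ^ 2) - cos x ^ 2) * log (tan (π/4 + x/2)) + sin x < 0 := by
      nlinarith [hL, hs, sq_nonneg (sin x), sq_nonneg (cos x)]
    exact mul_neg_of_pos_of_neg hc hneg
  apply strictAntiOn_of_deriv_neg (convex_Ioo 0 (π/2))
  · intro x hx
    exact ((main x hx).1).continuousAt.continuousWithinAt
  · intro x hx
    rw [interior_Ioo] at hx
    rw [((main x hx).1).deriv]
    exact (main x hx).2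
end

section
/- Let f > 0, κ > 0, and r ≥ 0. For all reals N > 0, A > 0, R > 0 and α ∈ (0, π/2) satisfying N R² (sin 2α + π − 2α) = A, one has N f / A + (κ f N / A) ( (2/3) R³ cos³α ∫_{−α}^{α} dt/cos³t + (2/3)(π − 2α) R³ + 2 r R (A/N) cos α ) ≥ 3 ( κ² f³ / (4 g(∞, r)²) )^{1/3}. -/
open Real

noncomputable def Lf (a : ℝ) : ℝ := Real.log ((1 + Real.sin a) / Real.cos a)
noncomputable def Sf (a : ℝ) : ℝ := Real.sin (2*a) + π - 2*a
noncomputable def Pf (r a : ℝ) : ℝ :=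
  (2/3)*(Real.sin a * Real.cos a + Real.cos a^3 * Lf a + (π - 2*a)) + 2*r*Real.cos a * Sf a
noncomputable def Ef (r a : ℝ) : ℝ := Real.sin a - Real.cos a^2 * Lf a - r * Sf a
noncomputable def Hf (r a : ℝ) : ℝ := (Pf r a)^2 / (Sf a)^3

lemma one_add_sin_pos_s16 {a : ℝ} (h : 0 < Real.cos a) : 0 < 1 + Real.sin a := by
  nlinarith [Real.sin_sq_add_cos_sq a, Real.sin_le_one a]

lemma hasDerivAt_Lf {a : ℝ} (h : 0 < Real.cos a) : HasDerivAt Lf (1 / Real.cos a) a := by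
  have h1 : 0 < 1 + Real.sin a := one_add_sin_pos_s16 h
  have hd : HasDerivAt (fun x => (1 + Real.sin x) / Real.cos x)
      ((Real.cos a * Real.cos a - (1 + Real.sin a) * (-Real.sin a)) / Real.cos a ^ 2) a :=
    ((Real.hasDerivAt_sin a).const_add 1).div (Real.hasDerivAt_cos a) h.ne'
  have hne : (1 + Real.sin a) / Real.cos a ≠ 0 := by positivity
  have h2 : Real.cos a * Real.cos a - (1 + Real.sin a) * (-Real.sin a) = 1 + Real.sin a := by
    linear_combination Real.sin_sq_add_cos_sq a
  have hh := hd.log hne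
  rw [h2] at hh
  refine hh.congr_deriv ?_
  field_simp

lemma hasDerivAt_Sf (a : ℝ) : HasDerivAt Sf (-(4 * Real.sin a ^ 2)) a := by
  have h1 : HasDerivAt (fun x : ℝ => 2*x) 2 a := by
    simpa using (hasDerivAt_id a).const_mul 2
  have h2 : HasDerivAt (fun x : ℝ => Real.sin (2*x)) (Real.cos (2*a) * 2) a :=
    (Real.hasDerivAt_sin (2*a)).comp a h1
  have h3 := (h2.add_const π).sub h1
  refine h3.congr_deriv ?_
  rw [Real.cos_two_mul]
  linear_combination (4) * Real.sin_sq_add_cos_sq a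

lemma hasDerivAt_Pf {a : ℝ} (r : ℝ) (h : 0 < Real.cos a) :
    HasDerivAt (Pf r)
      (-(2 * Real.sin a * (Real.sin a + Real.cos a^2 * Lf a
          + r * (3 * (2 * Real.sin a * Real.cos a) + (π - 2*a))))) a := by
  have t1 := (Real.hasDerivAt_sin a).mul (Real.hasDerivAt_cos a)
  have t2 := ((Real.hasDerivAt_cos a).pow 3).mul (hasDerivAt_Lf h)
  have h1 : HasDerivAt (fun x : ℝ => 2*x) 2 a := by
    simpa using (hasDerivAt_id a).const_mul 2
  have t3 : HasDerivAt (fun x : ℝ => π - 2*x) (0 - 2) a := (hasDerivAt_const a π).sub h1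
  have t4 := ((Real.hasDerivAt_cos a).mul (hasDerivAt_Sf a)).const_mul (2*r)
  have big := (((t1.add t2).add t3).const_mul (2/3 : ℝ)).add t4
  have hfun : Pf r = fun x => (2/3) * ((Real.sin x * Real.cos x
      + Real.cos x^3 * Lf x) + (π - 2*x)) + 2*r * (Real.cos x * Sf x) := by
    funext x; unfold Pf; ring
  rw [hfun]
  refine big.congr_deriv ?_
  have hc3 : Real.cos a ^ 3 * (1 / Real.cos a) = Real.cos a ^ 2 := by
    field_simp
  unfold Sf
  simp only [Pi.pow_apply]
  rw [hc3]
  push_cast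
  rw [Real.sin_two_mul]
  linear_combination (4/3 : ℝ) * Real.sin_sq_add_cos_sq a

lemma hasDerivAt_Ef {a : ℝ} (r : ℝ) (h : 0 < Real.cos a) :
    HasDerivAt (Ef r) (2 * Real.sin a * Real.cos a * Lf a + 4 * r * Real.sin a ^ 2) a := by
  have t1 := ((Real.hasDerivAt_cos a).pow 2).mul (hasDerivAt_Lf h)
  have big := ((Real.hasDerivAt_sin a).sub t1).sub ((hasDerivAt_Sf a).const_mul r)
  have hfun : Ef r = fun x => Real.sin x - Real.cos x ^ 2 * Lf x - r * Sf x := rfl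
  rw [hfun]
  refine big.congr_deriv ?_
  have hc2 : Real.cos a ^ 2 * (1 / Real.cos a) = Real.cos a := by
    field_simp
  simp only [Pi.pow_apply]
  rw [hc2]
  push_cast
  ring

lemma hasDerivAt_Hf {a : ℝ} (r : ℝ) (h : 0 < Real.cos a) (hS : 0 < Sf a) :
    HasDerivAt (Hf r)
      (4 * Real.sin a * (π - 2*a) * Pf r a * Ef r a / (Sf a)^4) a := by
  have hP := (hasDerivAt_Pf r h).pow 2
  have hS3 := (hasDerivAt_Sf a).pow 3
  have big := hP.div hS3 (by rw [Pi.pow_apply]; positivity)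
  have hfun : Hf r = fun x => (Pf r x)^2 / (Sf x)^3 := rfl
  rw [hfun]
  refine big.congr_deriv ?_
  have hSne : Sf a ≠ 0 := hS.ne'
  simp only [Pi.pow_apply]
  push_cast
  field_simp
  unfold Pf Ef Sf
  rw [Real.sin_two_mul]
  ring

lemma tan_id {x : ℝ} (h0 : 0 < x) (h : x < π/2) :
    Real.tan (π/4 + x/2) = (1 + Real.sin x) / Real.cos x := by
  have hpi := Real.pi_pos
  have hx2 : 0 < x/2 := by linarith
  have hx2' : x/2 < π/4 := by linarith
  have hcp : 0 < Real.cos (x/2) := Real.cos_pos_of_mem_Ioo ⟨by linarith, by linarith⟩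
  have hsp : 0 < Real.sin (x/2) := Real.sin_pos_of_pos_of_lt_pi hx2 (by linarith)
  have hc : Real.sin (x/2) < Real.cos (x/2) := by
    have h1 : Real.cos (π/4) < Real.cos (x/2) :=
      Real.cos_lt_cos_of_nonneg_of_le_pi (by positivity) (by linarith) hx2'
    have h2 : Real.sin (x/2) < Real.sin (π/4) :=
      Real.sin_lt_sin_of_lt_of_le_pi_div_two (by linarith) (by linarith) hx2'
    rw [Real.sin_pi_div_four] at h2
    rw [Real.cos_pi_div_four] at h1
    linarith
  have hcosx : Real.cos x = Real.cos (x/2)^2 - Real.sin (x/2)^2 := by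
    have h1 := Real.cos_two_mul (x/2)
    rw [show 2*(x/2) = x by ring] at h1
    rw [h1]
    linear_combination Real.sin_sq_add_cos_sq (x/2)
  have hsinx : Real.sin x = 2 * Real.sin (x/2) * Real.cos (x/2) := by
    have h1 := Real.sin_two_mul (x/2)
    rw [show 2*(x/2) = x by ring] at h1
    rw [h1]
  rw [Real.tan_eq_sin_div_cos, Real.sin_add, Real.cos_add, Real.sin_pi_div_four,
    Real.cos_pi_div_four, hcosx, hsinx]
  have hs2 : (0:ℝ) < Real.sqrt 2 := by positivity
  have hd1 : Real.sqrt 2 / 2 * Real.cos (x/2) - Real.sqrt 2 / 2 * Real.sin (x/2) ≠ 0 := by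
    nlinarith
  have hd2 : Real.cos (x/2)^2 - Real.sin (x/2)^2 ≠ 0 := by nlinarith
  rw [div_eq_div_iff hd1 hd2]
  linear_combination (Real.sqrt 2 / 2 * (Real.cos (x/2) - Real.sin (x/2)))
    * Real.sin_sq_add_cos_sq (x/2)

lemma cos_pos_of_Ioo {x : ℝ} (hx : x ∈ Set.Ioo 0 (π/2)) : 0 < Real.cos x :=
  Real.cos_pos_of_mem_Ioo ⟨by linarith [hx.1, Real.pi_pos], hx.2⟩

lemma Sf_pos {x : ℝ} (hx : x ∈ Set.Ioo 0 (π/2)) : 0 < Sf x := by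
  have h1 : 0 < Real.sin (2*x) :=
    Real.sin_pos_of_pos_of_lt_pi (by linarith [hx.1]) (by linarith [hx.2])
  unfold Sf
  linarith [hx.2]

lemma Lf_nonneg {x : ℝ} (hs : 0 ≤ Real.sin x) (hc : 0 < Real.cos x) : 0 ≤ Lf x := by
  apply Real.log_nonneg
  rw [le_div_iff₀ hc]
  linarith [Real.cos_le_one x]

lemma Pf_pos {r x : ℝ} (hr : 0 ≤ r) (hx : x ∈ Set.Ioo 0 (π/2)) : 0 < Pf r x := by
  have hc := cos_pos_of_Ioo hx
  have hs : 0 < Real.sin x := Real.sin_pos_of_pos_of_lt_pi hx.1 (by linarith [hx.2, Real.pi_pos])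
  have hL := Lf_nonneg hs.le hc
  have hS := Sf_pos hx
  unfold Pf
  have h1 : 0 < π - 2*x := by linarith [hx.2]
  positivity

lemma Ef_mono {r : ℝ} (hr : 0 ≤ r) : MonotoneOn (Ef r) (Set.Ioo 0 (π/2)) := by
  apply monotoneOn_of_deriv_nonneg (convex_Ioo _ _)
  · intro x hx
    exact ((hasDerivAt_Ef r (cos_pos_of_Ioo hx)).continuousAt).continuousWithinAt
  · intro x hx
    rw [interior_Ioo] at hx
    exact ((hasDerivAt_Ef r (cos_pos_of_Ioo hx)).differentiableAt).differentiableWithinAt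
  · intro x hx
    rw [interior_Ioo] at hx
    have hc := cos_pos_of_Ioo hx
    have hs : 0 < Real.sin x :=
      Real.sin_pos_of_pos_of_lt_pi hx.1 (by linarith [hx.2, Real.pi_pos])
    have hL := Lf_nonneg hs.le hc
    rw [(hasDerivAt_Ef r hc).deriv]
    positivity

lemma Hf_min {r αs α : ℝ} (hr : 0 ≤ r) (hαs : αs ∈ Set.Ioo 0 (π/2))
    (hα : α ∈ Set.Ioo 0 (π/2)) (hE : Ef r αs = 0) : Hf r αs ≤ Hf r α := by
  rcases le_total αs α with hle | hle
  · have hmono : MonotoneOn (Hf r) (Set.Icc αs α) := by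
      apply monotoneOn_of_deriv_nonneg (convex_Icc _ _)
      · intro x hx
        have hx' : x ∈ Set.Ioo 0 (π/2) := ⟨lt_of_lt_of_le hαs.1 hx.1, lt_of_le_of_lt hx.2 hα.2⟩
        exact ((hasDerivAt_Hf r (cos_pos_of_Ioo hx') (Sf_pos hx')).continuousAt).continuousWithinAt
      · intro x hx
        rw [interior_Icc] at hx
        have hx' : x ∈ Set.Ioo 0 (π/2) := ⟨lt_trans hαs.1 hx.1, lt_trans hx.2 hα.2⟩
        exact ((hasDerivAt_Hf r (cos_pos_of_Ioo hx') (Sf_pos hx')).differentiableAt).differentiableWithinAt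
      · intro x hx
        rw [interior_Icc] at hx
        have hx' : x ∈ Set.Ioo 0 (π/2) := ⟨lt_trans hαs.1 hx.1, lt_trans hx.2 hα.2⟩
        have hc := cos_pos_of_Ioo hx'
        have hS := Sf_pos hx'
        have hs : 0 < Real.sin x :=
          Real.sin_pos_of_pos_of_lt_pi hx'.1 (by linarith [hx'.2, Real.pi_pos])
        have hEx : 0 ≤ Ef r x := by
          rw [← hE]; exact Ef_mono hr hαs hx' (le_of_lt hx.1)
        rw [(hasDerivAt_Hf r hc hS).deriv]
        have hP := Pf_pos hr hx'
        have hq : 0 < π - 2*x := by linarith [hx'.2]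
        positivity
    exact hmono (Set.left_mem_Icc.mpr hle) (Set.right_mem_Icc.mpr hle) hle
  · have hmono : AntitoneOn (Hf r) (Set.Icc α αs) := by
      apply antitoneOn_of_deriv_nonpos (convex_Icc _ _)
      · intro x hx
        have hx' : x ∈ Set.Ioo 0 (π/2) := ⟨lt_of_lt_of_le hα.1 hx.1, lt_of_le_of_lt hx.2 hαs.2⟩
        exact ((hasDerivAt_Hf r (cos_pos_of_Ioo hx') (Sf_pos hx')).continuousAt).continuousWithinAt
      · intro x hx
        rw [interior_Icc] at hx
        have hx' : x ∈ Set.Ioo 0 (π/2) := ⟨lt_trans hα.1 hx.1, lt_trans hx.2 hαs.2⟩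
        exact ((hasDerivAt_Hf r (cos_pos_of_Ioo hx') (Sf_pos hx')).differentiableAt).differentiableWithinAt
      · intro x hx
        rw [interior_Icc] at hx
        have hx' : x ∈ Set.Ioo 0 (π/2) := ⟨lt_trans hα.1 hx.1, lt_trans hx.2 hαs.2⟩
        have hc := cos_pos_of_Ioo hx'
        have hS := Sf_pos hx'
        have hs : 0 < Real.sin x :=
          Real.sin_pos_of_pos_of_lt_pi hx'.1 (by linarith [hx'.2, Real.pi_pos])
        have hEx : Ef r x ≤ 0 := by
          rw [← hE]; exact Ef_mono hr hx' hαs (le_of_lt hx.2)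
        rw [(hasDerivAt_Hf r hc hS).deriv]
        have hP := Pf_pos hr hx'
        have hq : 0 < π - 2*x := by linarith [hx'.2]
        apply div_nonpos_of_nonpos_of_nonneg
        · have h4 : 0 < 4 * Real.sin x * (π - 2*x) * Pf r x := by positivity
          exact mul_nonpos_of_nonneg_of_nonpos h4.le hEx
        · positivity
    exact hmono (Set.left_mem_Icc.mpr hle) (Set.right_mem_Icc.mpr hle) hle

lemma Lf_neg {a : ℝ} (hc : 0 < Real.cos a) : Lf (-a) = - Lf a := by
  have h1 := one_add_sin_pos_s16 hc
  have h1' : 0 < 1 - Real.sin a := by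
    nlinarith [Real.sin_sq_add_cos_sq a]
  unfold Lf
  rw [Real.sin_neg, Real.cos_neg]
  rw [(by ring : (1:ℝ) + -Real.sin a = 1 - Real.sin a)]
  rw [show (1 - Real.sin a)/Real.cos a = Real.cos a/(1+Real.sin a) by
    rw [div_eq_div_iff hc.ne' h1.ne']
    linear_combination (-1 : ℝ) * Real.sin_sq_add_cos_sq a]
  rw [← Real.log_inv]
  congr 1
  rw [inv_div]

lemma integral_val {α : ℝ} (h0 : 0 < α) (h : α < π/2) :
    ∫ t in (-α)..α, 1 / Real.cos t ^ 3 = Real.sin α / Real.cos α ^ 2 + Lf α := by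
  have hpi := Real.pi_pos
  have hcc : ∀ t ∈ Set.uIcc (-α) α, 0 < Real.cos t := by
    intro t ht
    rw [Set.uIcc_of_le (by linarith)] at ht
    exact Real.cos_pos_of_mem_Ioo ⟨by linarith [ht.1], by linarith [ht.2]⟩
  have hF : ∀ t ∈ Set.uIcc (-α) α,
      HasDerivAt (fun y => (Real.sin y / Real.cos y ^ 2 + Lf y) / 2) (1 / Real.cos t ^ 3) t := by
    intro t ht
    have hc := hcc t ht
    have hd := (((Real.hasDerivAt_sin t).div ((Real.hasDerivAt_cos t).pow 2)
      (by rw [Pi.pow_apply]; positivity)).add (hasDerivAt_Lf hc)).div_const 2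
    refine hd.congr_deriv ?_
    simp only [Pi.pow_apply]
    push_cast
    field_simp
    ring_nf
    linear_combination (2 : ℝ) * Real.sin_sq_add_cos_sq t
  have hint : IntervalIntegrable (fun t => 1 / Real.cos t ^ 3) MeasureTheory.volume (-α) α := by
    apply ContinuousOn.intervalIntegrable
    apply ContinuousOn.div continuousOn_const ((Real.continuous_cos.pow 3).continuousOn)
    intro t ht
    have := hcc t ht
    show Real.cos t ^ 3 ≠ 0
    positivity
  rw [intervalIntegral.integral_eq_sub_of_hasDerivAt hF hint]
  have hc := hcc α (Set.right_mem_uIcc)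
  rw [Real.sin_neg, Real.cos_neg, Lf_neg hc]
  ring

lemma amgm {x y : ℝ} (hx : 0 < x) (hy : 0 < y) :
    3 * (x * y^2) ^ ((1:ℝ)/3) ≤ x + 2*y := by
  have h1 : x * y^2 ≤ ((x + 2*y)/3)^3 := by
    nlinarith [sq_nonneg (x - y), mul_nonneg (sq_nonneg (x - y)) (by linarith : (0:ℝ) ≤ x + 8*y)]
  have h2 : (x * y^2) ^ ((1:ℝ)/3) ≤ (((x + 2*y)/3)^3) ^ ((1:ℝ)/3) :=
    Real.rpow_le_rpow (by positivity) h1 (by norm_num)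
  have h3 : (((x + 2*y)/3)^3) ^ ((1:ℝ)/3) = (x + 2*y)/3 := by
    rw [← Real.rpow_natCast ((x + 2*y)/3) 3, ← Real.rpow_mul (by positivity)]
    norm_num
  rw [h3] at h2
  linarith

theorem stmt_16 (f κ r : ℝ) (hf : 0 < f) (hκ : 0 < κ) (hr : 0 ≤ r)
    (αs : ℝ) (hmem : αs ∈ Set.Ioo 0 (π/2))
    (hroot : sin αs - cos αs ^ 2 * log (tan (π/4 + αs/2))
        - r * sin (2*αs) - r * (π - 2*αs) = 0)
    (N A R α : ℝ) (hN : 0 < N) (hA : 0 < A) (hR : 0 < R) (hα : α ∈ Set.Ioo 0 (π/2))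
    (hcon : N * R^2 * (sin (2*α) + π - 2*α) = A) :
    3 * (κ^2 * f^3 /
        (4 * (3 * (sin (2*αs) + π - 2*αs) ^ ((1:ℝ)/2) / (2 + 4*r*cos αs)) ^ 2)) ^ ((1:ℝ)/3)
      ≤ N * f / A + κ * f * N / A *
          ((2/3) * R^3 * cos α ^ 3 * (∫ t in (-α)..α, 1 / cos t ^ 3)
            + (2/3) * (π - 2*α) * R^3 + 2 * r * R * (A/N) * cos α) := by
  have hcα := cos_pos_of_Ioo hα
  have hcs := cos_pos_of_Ioo hmem
  have hSα := Sf_pos hα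
  have hSs := Sf_pos hmem
  have hE0 : Ef r αs = 0 := by
    unfold Ef Sf Lf
    rw [← tan_id hmem.1 hmem.2]
    linear_combination hroot
  have hH : Hf r αs ≤ Hf r α := Hf_min hr hmem hα hE0
  -- value of Pf at αs
  have hd : (0:ℝ) < 2 + 4*r*Real.cos αs := by nlinarith
  have hPs : Pf r αs = (2 + 4*r*Real.cos αs) * Sf αs / 3 := by
    have hSdef : Sf αs = Real.sin (2*αs) + π - 2*αs := rfl
    unfold Pf
    unfold Ef at hE0
    linear_combination ((-2/3 : ℝ)*Real.cos αs) * hE0 +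
      ((-2/3 : ℝ)) * Real.sin_two_mul αs +
      ((-2/3 : ℝ)) * hSdef
  have hHs : Hf r αs = (2 + 4*r*Real.cos αs)^2 / (9 * Sf αs) := by
    unfold Hf
    rw [hPs]
    field_simp
    ring
  have hsq : ((Sf αs) ^ ((1:ℝ)/2))^2 = Sf αs := by
    rw [← Real.rpow_natCast ((Sf αs) ^ ((1:ℝ)/2)) 2, ← Real.rpow_mul hSs.le]
    norm_num
  have hrp : (0:ℝ) < (Sf αs) ^ ((1:ℝ)/2) := Real.rpow_pos_of_pos hSs _
  have hLHSeq : κ^2 * f^3 /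
        (4 * (3 * (Real.sin (2*αs) + π - 2*αs) ^ ((1:ℝ)/2) / (2 + 4*r*Real.cos αs)) ^ 2)
      = κ^2 * f^3 * Hf r αs / 4 := by
    have e0 : Real.sin (2*αs) + π - 2*αs = Sf αs := rfl
    rw [e0]
    have e1 : (3 * (Sf αs) ^ ((1:ℝ)/2) / (2 + 4*r*Real.cos αs)) ^ 2
        = 9 * Sf αs / (2 + 4*r*Real.cos αs)^2 := by
      rw [div_pow, mul_pow, hsq]
      norm_num
    rw [e1, hHs]
    field_simp
  -- rewrite the integral
  rw [integral_val hα.1 hα.2]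
  -- rewrite the right-hand side
  have hsinα : 0 < Real.sin α :=
    Real.sin_pos_of_pos_of_lt_pi hα.1 (by linarith [hα.2, Real.pi_pos])
  have hNA : A = N * R^2 * Sf α := hcon.symm
  have hRHSeq : N * f / A + κ * f * N / A *
          ((2/3) * R^3 * Real.cos α ^ 3 * (Real.sin α / Real.cos α ^ 2 + Lf α)
            + (2/3) * (π - 2*α) * R^3 + 2 * r * R * (A/N) * Real.cos α)
      = f / (R^2 * Sf α) + 2 * (κ * f * R * Pf r α / (2 * Sf α)) := by
    rw [hNA]
    unfold Pf
    field_simp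
  rw [hRHSeq, hLHSeq]
  have hPα := Pf_pos hr hα
  set x := f / (R^2 * Sf α) with hxdef
  set y := κ * f * R * Pf r α / (2 * Sf α) with hydef
  have hx : 0 < x := by rw [hxdef]; positivity
  have hy : 0 < y := by rw [hydef]; positivity
  have hxy : x * y^2 = κ^2 * f^3 * Hf r α / 4 := by
    rw [hxdef, hydef]
    unfold Hf
    field_simp
    ring
  have ham := amgm hx hy
  rw [hxy] at ham
  have hmono : 3 * (κ^2 * f^3 * Hf r αs / 4) ^ ((1:ℝ)/3)
      ≤ 3 * (κ^2 * f^3 * Hf r α / 4) ^ ((1:ℝ)/3) := by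
    have h1 : (0:ℝ) ≤ κ^2 * f^3 * Hf r αs / 4 := by
      rw [hHs]; positivity
    have h2 : κ^2 * f^3 * Hf r αs / 4 ≤ κ^2 * f^3 * Hf r α / 4 := by
      have : (0:ℝ) < κ^2 * f^3 := by positivity
      have := mul_le_mul_of_nonneg_left hH this.le
      linarith
    have := Real.rpow_le_rpow h1 h2 (by norm_num : (0:ℝ) ≤ 1/3)
    linarith
  linarith
end
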